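/- Let R be a finite commutative ring with characteristic N, and let n ≥ 1 be an integer. Let S = {α_1, ..., α_{|S|}} be a finite nonempty set of n-tuples of nonnegative integers, none equal to (0, ..., 0), and write α_k = (α^{(k)}_1, ..., α^{(k)}_n). Let χ_1, ..., χ_{|S|} be nontrivial additive characters of R, and let d be a positive integer such that d < lpf(N) and d ≥ max_{1 ≤ k ≤ |S|} ∑_{i=1}^{n} α^{(k)}_i. Then | (1/|R|^n) · ∑_{y ∈ R^n} ∏_{k=1}^{|S|} χ_k(y^{α_k}) | ≤ ((d−1)/lpf(N))^{2^{−d}}, where y^{α_k} denotes ∏_{i=1}^{n} y_i^{α^{(k)}_i} computed in R. -/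

import Mathlib

open scoped BigOperators Classical

/-- `χ : R → ℂ` is an additive character: a homomorphism from `(R, +)` to the unit circle. -/
def IsAddCharFn {R : Type*} [AddGroup R] (χ : R → ℂ) : Prop :=
  (∀ x y, χ (x + y) = χ x * χ y) ∧ ∀ x, ‖χ x‖ = 1

set_option linter.unusedSectionVars false

section CharLemmas
variable {R : Type*} [AddCommGroup R] {χ : R → ℂ}

lemma charfn_ne_zero (h : IsAddCharFn χ) (x : R) : χ x ≠ 0 := by
  intro hx
  have := h.2 x
  rw [hx] at this; simp at this

lemma charfn_zero (h : IsAddCharFn χ) : χ 0 = 1 := by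
  have h0 := h.1 0 0
  rw [add_zero] at h0
  have hne := charfn_ne_zero h 0
  have : χ 0 * 1 = χ 0 * χ 0 := by rw [mul_one]; exact h0
  exact (mul_left_cancel₀ hne this).symm

lemma charfn_neg (h : IsAddCharFn χ) (x : R) : χ (-x) = (χ x)⁻¹ := by
  have h1 := h.1 x (-x)
  rw [add_neg_cancel, charfn_zero h] at h1
  field_simp [charfn_ne_zero h x]
  linear_combination -h1

lemma charfn_conj (h : IsAddCharFn χ) (b : R) : (starRingEnd ℂ) (χ b) = (χ b)⁻¹ := by
  have habs : χ b * (starRingEnd ℂ) (χ b) = 1 := by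
    rw [Complex.mul_conj]
    norm_cast
    rw [← Complex.sq_norm, h.2 b]; norm_num
  field_simp [charfn_ne_zero h b] at habs ⊢
  linear_combination habs

lemma charfn_sub_conj (h : IsAddCharFn χ) (a b : R) :
    χ a * (starRingEnd ℂ) (χ b) = χ (a - b) := by
  rw [charfn_conj h, sub_eq_add_neg, h.1 a (-b), charfn_neg h]

lemma charfn_sum (h : IsAddCharFn χ) {ι : Type*} (s : Finset ι) (f : ι → R) :
    χ (∑ i ∈ s, f i) = ∏ i ∈ s, χ (f i) := by
  classical
  induction s using Finset.cons_induction with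
  | empty => simp [charfn_zero h]
  | cons a s ha ih => rw [Finset.sum_cons, Finset.prod_cons, h.1, ih]

end CharLemmas

section Expand
variable {R : Type*} [CommRing R] {n : ℕ}

def mpow (y : Fin n → R) (β : Fin n → ℕ) : R := ∏ i, y i ^ β i

noncomputable def coefC (β γ : Fin n → ℕ) (h : Fin n → R) : R :=
  if γ = β then 0 else ((∏ i, (β i).choose (γ i) : ℕ) : R) * ∏ i, h i ^ (β i - γ i)

def BigB (n d : ℕ) : Finset (Fin n → ℕ) := Fintype.piFinset (fun _ => Finset.range (d+1))

lemma mem_BigB {d : ℕ} {γ : Fin n → ℕ} : γ ∈ BigB n d ↔ ∀ i, γ i ≤ d := by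
  simp [BigB, Nat.lt_succ_iff]

lemma expand_mpow (d : ℕ) (β : Fin n → ℕ) (hβ : ∀ i, β i ≤ d) (y h : Fin n → R) :
    mpow (y + h) β - mpow y β = ∑ γ ∈ BigB n d, coefC β γ h * mpow y γ := by
  classical
  set t : (Fin n → ℕ) → R :=
    fun γ => ∏ i, (y i ^ γ i * h i ^ (β i - γ i) * ((β i).choose (γ i) : R)) with ht
  have key : mpow (y + h) β = ∑ γ ∈ BigB n d, t γ := by
    have h1 : mpow (y + h) β
        = ∏ i, ∑ g ∈ Finset.range (β i + 1), (y i ^ g * h i ^ (β i - g) * ((β i).choose g : R)) := by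
      unfold mpow
      refine Finset.prod_congr rfl fun i _ => ?_
      simpa using add_pow (y i) (h i) (β i)
    rw [h1, Finset.prod_univ_sum]
    refine Finset.sum_subset ?_ ?_
    · intro γ hγ
      rw [mem_BigB]
      intro i
      have h2 := (Fintype.mem_piFinset.1 hγ) i
      rw [Finset.mem_range] at h2
      have := hβ i
      omega
    · intro γ hγ hγ'
      rw [Fintype.mem_piFinset] at hγ'
      push_neg at hγ'
      obtain ⟨i, hi⟩ := hγ'
      rw [Finset.mem_range] at hi
      apply Finset.prod_eq_zero (Finset.mem_univ i)
      rw [Nat.choose_eq_zero_of_lt (by omega)]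
      simp
  have hβB : β ∈ BigB n d := mem_BigB.2 hβ
  have htβ : t β = mpow y β := by
    simp [ht, mpow]
  have hterm : ∀ γ ∈ BigB n d, coefC β γ h * mpow y γ = if γ = β then 0 else t γ := by
    intro γ _
    unfold coefC
    split
    · simp
    · rw [ht]
      simp only [Finset.prod_mul_distrib]
      push_cast
      unfold mpow
      ring
  rw [key, Finset.sum_congr rfl hterm]
  have h3 : ∑ γ ∈ BigB n d, (if γ = β then (0:R) else t γ)
      = ∑ γ ∈ (BigB n d).erase β, t γ := by
    rw [← Finset.sum_erase (BigB n d) (by simp : (if β = β then (0:R) else t β) = 0)]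
    exact Finset.sum_congr rfl fun γ hγ => if_neg (Finset.mem_erase.1 hγ).1
  rw [h3, Finset.sum_erase_eq_sub hβB, htβ]

end Expand

lemma sum_eq_one_exists {n : ℕ} {β : Fin n → ℕ} (hs : ∑ i, β i = 1) :
    ∃ j, β j = 1 ∧ ∀ i, i ≠ j → β i = 0 := by
  have hex : ∃ j, β j ≠ 0 := by
    by_contra hc
    push_neg at hc
    simp [hc] at hs
  obtain ⟨j, hj⟩ := hex
  have hsplit := Finset.add_sum_erase Finset.univ β (Finset.mem_univ j)
  rw [hs] at hsplit
  have h0 : ∑ i ∈ Finset.univ.erase j, β i = 0 := by omega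
  exact ⟨j, by omega, fun i hi =>
    Finset.sum_eq_zero_iff.1 h0 i (Finset.mem_erase.2 ⟨hi, Finset.mem_univ i⟩)⟩

lemma base_sum_zero {R : Type*} [CommRing R] [Fintype R] {n : ℕ}
    (B : Finset (Fin n → ℕ)) (ψ : (Fin n → ℕ) → R → ℂ)
    (hBne : B.Nonempty)
    (hchar : ∀ β ∈ B, IsAddCharFn (ψ β)) (hnt : ∀ β ∈ B, ¬ ∀ x, ψ β x = 1)
    (hdeg1 : ∀ β ∈ B, ∑ i, β i = 1) :
    ∑ y : Fin n → R, ∏ β ∈ B, ψ β (mpow y β) = 0 := by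
  classical
  obtain ⟨β₀, hβ₀⟩ := hBne
  obtain ⟨j₀, hj₀1, hj₀0⟩ := sum_eq_one_exists (hdeg1 β₀ hβ₀)
  have hnt₀ := hnt β₀ hβ₀
  push_neg at hnt₀
  obtain ⟨c, hc⟩ := hnt₀
  set v : Fin n → R := fun i => if i = j₀ then c else 0 with hv
  set F : (Fin n → R) → ℂ := fun y => ∏ β ∈ B, ψ β (mpow y β) with hF
  have key : ∀ y, F (y + v) = ψ β₀ c * F y := by
    intro y
    have hfac : ∀ β ∈ B, ψ β (mpow (y + v) β)
        = ψ β (mpow y β) * (if β = β₀ then ψ β₀ c else 1) := by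
      intro β hβ
      obtain ⟨j, hj1, hj0⟩ := sum_eq_one_exists (hdeg1 β hβ)
      have hm : ∀ z : Fin n → R, mpow z β = z j := by
        intro z; unfold mpow
        rw [Finset.prod_eq_single j (fun i _ hi => by rw [hj0 i hi, pow_zero]) (by simp)]
        rw [hj1, pow_one]
      rw [hm, hm]
      show ψ β (y j + v j) = _
      by_cases hββ₀ : β = β₀
      · subst hββ₀
        have hjj : j = j₀ := by
          by_contra hne
          have := hj₀0 j hne
          omega
        have hvj₀ : v j₀ = c := by simp [hv]
        rw [hjj, hvj₀, (hchar β hβ).1]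
        rw [if_pos rfl]
      · have hjj : j ≠ j₀ := by
          intro hjeq
          apply hββ₀
          funext i
          by_cases hij : i = j
          · subst hij; rw [hj1, hjeq, hj₀1]
          · rw [hj0 i hij, hj₀0 i (by rw [hjeq] at hij; exact hij)]
        have hvj : v j = 0 := by simp [hv, hjj]
        rw [hvj, add_zero, if_neg hββ₀, mul_one]
    rw [hF]
    simp only
    rw [Finset.prod_congr rfl hfac, Finset.prod_mul_distrib, Finset.prod_ite_eq' B β₀
      (fun _ => ψ β₀ c), if_pos hβ₀, mul_comm]
  have hsum : ∑ y : Fin n → R, F (y + v) = ∑ y : Fin n → R, F y :=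
    Fintype.sum_equiv (Equiv.addRight v) _ _ (fun y => rfl)
  have h2 : (ψ β₀ c - 1) * ∑ y : Fin n → R, F y = 0 := by
    have : ∑ y : Fin n → R, F (y + v) = ψ β₀ c * ∑ y : Fin n → R, F y := by
      rw [Finset.mul_sum]
      exact Finset.sum_congr rfl fun y _ => key y
    rw [hsum] at this
    linear_combination -this
  rcases mul_eq_zero.1 h2 with h | h
  · exact absurd (by linear_combination h) hc
  · exact h

lemma sum_succ_exists {n : ℕ} {β γ : Fin n → ℕ} (hle : ∀ i, γ i ≤ β i)
    (hsum : ∑ i, β i = ∑ i, γ i + 1) :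
    ∃ j, β j = γ j + 1 ∧ ∀ i, i ≠ j → β i = γ i := by
  have hδ : ∑ i, (β i - γ i) = 1 := by
    have : ∑ i, (β i - γ i) + ∑ i, γ i = ∑ i, β i := by
      rw [← Finset.sum_add_distrib]
      exact Finset.sum_congr rfl fun i _ => by have := hle i; omega
    omega
  obtain ⟨j, hj1, hj0⟩ := sum_eq_one_exists hδ
  exact ⟨j, by have := hle j; omega, fun i hi => by have := hj0 i hi; have := hle i; omega⟩

lemma sum_lt_of_le_of_ne {n : ℕ} {γ β : Fin n → ℕ} (hle : ∀ i, γ i ≤ β i) (hne : γ ≠ β) :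
    ∑ i, γ i < ∑ i, β i := by
  refine Finset.sum_lt_sum (fun i _ => hle i) ?_
  by_contra hc
  push_neg at hc
  exact hne (funext fun i => le_antisymm (hle i) (hc i (Finset.mem_univ i)))

section Ring
variable {R : Type*} [CommRing R] [Fintype R] [Nontrivial R]

lemma coprime_of_lt_minFac {m : ℕ} (h1 : 1 ≤ m) (h2 : m < (ringChar R).minFac) :
    Nat.Coprime m (ringChar R) := by
  by_contra hc
  set g := Nat.gcd m (ringChar R) with hg
  have hq := Nat.minFac_prime (show g ≠ 1 from hc)
  have hdvdm : g.minFac ∣ m := (Nat.minFac_dvd g).trans (Nat.gcd_dvd_left _ _)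
  have hdvdN : g.minFac ∣ ringChar R := (Nat.minFac_dvd g).trans (Nat.gcd_dvd_right _ _)
  have h3 : (ringChar R).minFac ≤ g.minFac := Nat.minFac_le_of_dvd hq.two_le hdvdN
  have h4 : g.minFac ≤ m := Nat.le_of_dvd h1 hdvdm
  omega

lemma exists_cast_inv {m : ℕ} (h : Nat.Coprime m (ringChar R)) :
    ∃ u : R, (m : R) * u = 1 := by
  have hb := Nat.gcd_eq_gcd_ab m (ringChar R)
  rw [h] at hb
  refine ⟨((Nat.gcdA m (ringChar R) : ℤ) : R), ?_⟩
  have hcast : ((1 : ℤ) : R) = ((m : ℤ) : R) * ((Nat.gcdA m (ringChar R) : ℤ) : R)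
      + (((ringChar R : ℕ) : ℤ) : R) * ((Nat.gcdB m (ringChar R) : ℤ) : R) := by
    rw [← Int.cast_mul, ← Int.cast_mul, ← Int.cast_add, ← hb]
    norm_num
  have hN : (((ringChar R : ℕ) : ℤ) : R) = 0 := by
    push_cast
    exact CharP.cast_eq_zero R (ringChar R)
  rw [hN, zero_mul, add_zero] at hcast
  push_cast at hcast
  exact hcast.symm

/-- Counting lemma: the set of `h` for which the distinguished differenced character is trivial
has density at most `1/p`. -/
lemma count_bad {n d : ℕ}
    (B : Finset (Fin n → ℕ)) (ψ : (Fin n → ℕ) → R → ℂ)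
    (hchar : ∀ β ∈ B, IsAddCharFn (ψ β)) (hnt : ∀ β ∈ B, ¬ ∀ x, ψ β x = 1)
    (hdp : d < (ringChar R).minFac)
    (β₁ : Fin n → ℕ) (hβ₁ : β₁ ∈ B) (hβ₁max : ∀ β ∈ B, ∑ i, β i ≤ ∑ i, β₁ i)
    (hβ₁d : ∑ i, β₁ i ≤ d)
    (j₁ : Fin n) (hj₁ : 0 < β₁ j₁) :
    (ringChar R).minFac *
      (Finset.univ.filter (fun h : Fin n → R => ∀ x,
        (∏ β ∈ B, ψ β (coefC β (Function.update β₁ j₁ (β₁ j₁ - 1)) h * x)) = 1)).card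
      ≤ Fintype.card R ^ n := by
  classical
  set p := (ringChar R).minFac with hp
  set γs : Fin n → ℕ := Function.update β₁ j₁ (β₁ j₁ - 1) with hγs
  set D := ∑ i, β₁ i with hD
  -- basic facts about γs
  have hγs_apply : ∀ i, γs i = if i = j₁ then β₁ j₁ - 1 else β₁ i := by
    intro i; rw [hγs, Function.update_apply]
  have hγsle : ∀ i, γs i ≤ β₁ i := by
    intro i
    rw [hγs_apply]
    by_cases hij : i = j₁
    · subst hij; rw [if_pos rfl]; omega
    · rw [if_neg hij]
  have hγsj₁ : γs j₁ = β₁ j₁ - 1 := by rw [hγs_apply, if_pos rfl]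
  have hγsne : γs ≠ β₁ := by
    intro hc
    have := congrFun hc j₁
    rw [hγsj₁] at this
    omega
  have hγssum : ∑ i, γs i + 1 = D := by
    rw [hγs, hD]
    rw [Finset.sum_update_of_mem (Finset.mem_univ j₁)]
    rw [← Finset.add_sum_erase Finset.univ β₁ (Finset.mem_univ j₁)]
    have : Finset.univ \ {j₁} = Finset.univ.erase j₁ := by
      ext i; simp [Finset.mem_erase, and_comm]
    rw [this]
    omega
  -- value of coefC at updated monomials
  have hcoefval : ∀ (β : Fin n → ℕ) (j : Fin n), (∀ i, i ≠ j → β i = γs i) → β j = γs j + 1 →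
      ∀ h : Fin n → R, coefC β γs h = ((γs j + 1 : ℕ) : R) * h j := by
    intro β j hne hj h
    have hβne : γs ≠ β := by
      intro hc; have := congrFun hc j; omega
    rw [coefC, if_neg hβne]
    have hch : ∏ i, (β i).choose (γs i) = γs j + 1 := by
      rw [Finset.prod_eq_single j (fun i _ hi => by rw [hne i hi, Nat.choose_self])
        (fun hj' => absurd (Finset.mem_univ j) hj')]
      rw [hj, Nat.choose_succ_self_right]
    have hh : ∏ i, h i ^ (β i - γs i) = h j := by
      rw [Finset.prod_eq_single j (fun i _ hi => by rw [hne i hi, Nat.sub_self, pow_zero])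
        (fun hj' => absurd (Finset.mem_univ j) hj')]
      have hb1 : β j - γs j = 1 := by omega
      rw [hb1, pow_one]
    rw [hch, hh]
  -- linear structure of coefC (β ∈ B) at γs
  have hlin : ∀ β ∈ B, ∃ (r : R) (j : Fin n),
      (∀ h : Fin n → R, coefC β γs h = r * h j) ∧
      (r ≠ 0 → (∀ i, i ≠ j → β i = γs i) ∧ β j = γs j + 1) := by
    intro β hβ
    by_cases hc1 : ∀ i, γs i ≤ β i
    · by_cases hc2 : γs = β
      · exact ⟨0, j₁, fun h => by rw [coefC, if_pos hc2, zero_mul], fun hr => absurd rfl hr⟩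
      · have hlt : ∑ i, γs i < ∑ i, β i := sum_lt_of_le_of_ne hc1 hc2
        have hle : ∑ i, β i ≤ D := hβ₁max β hβ
        have hsum : ∑ i, β i = ∑ i, γs i + 1 := by omega
        obtain ⟨j, hj1, hj0⟩ := sum_succ_exists hc1 hsum
        exact ⟨((γs j + 1 : ℕ) : R), j, fun h => hcoefval β j hj0 hj1 h, fun _ => ⟨hj0, hj1⟩⟩
    · push_neg at hc1
      obtain ⟨i, hi⟩ := hc1
      refine ⟨0, j₁, fun h => ?_, fun hr => absurd rfl hr⟩
      rw [coefC]
      split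
      · rw [zero_mul]
      · rw [Finset.prod_eq_zero (Finset.mem_univ i) (Nat.choose_eq_zero_of_lt hi)]
        push_cast
        rw [zero_mul, zero_mul]
  -- the predicate
  set P : (Fin n → R) → Prop := fun h => ∀ x,
      (∏ β ∈ B, ψ β (coefC β γs h * x)) = 1 with hP
  have hPsub : ∀ h h', P h → P h' → P (h - h') := by
    intro h h' hh hh' x
    have hfac : ∀ β ∈ B, ψ β (coefC β γs (h - h') * x)
        = ψ β (coefC β γs h * x) * (ψ β (coefC β γs h' * x))⁻¹ := by
      intro β hβ
      obtain ⟨r, j, hrj, -⟩ := hlin β hβ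
      rw [hrj, hrj, hrj]
      have : r * (h - h') j * x = r * h j * x + -(r * h' j * x) := by
        simp [Pi.sub_apply]; ring
      rw [this, (hchar β hβ).1, charfn_neg (hchar β hβ)]
    rw [Finset.prod_congr rfl hfac, Finset.prod_mul_distrib, Finset.prod_inv_distrib,
      hh x, hh' x]
    norm_num
  -- v and the non-membership of its multiples
  set v : Fin n → R := fun i => if i = j₁ then (1 : R) else 0 with hv
  have hβ₁eq : Function.update γs j₁ (γs j₁ + 1) = β₁ := by
    funext i
    rw [Function.update_apply]
    split
    · rename_i hij; subst hij; rw [hγsj₁]; omega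
    · rename_i hij; rw [hγs_apply, if_neg hij]
  have hmv : ∀ m : ℕ, 1 ≤ m → m < p → ¬ P (m • v) := by
    intro m hm1 hmp hPm
    have hb1 : 1 ≤ β₁ j₁ := hj₁
    have hbd : β₁ j₁ ≤ d := by
      calc β₁ j₁ ≤ ∑ i, β₁ i := Finset.single_le_sum (fun i _ => Nat.zero_le _) (Finset.mem_univ j₁)
      _ ≤ d := hβ₁d
    have hcop : Nat.Coprime (β₁ j₁ * m) (ringChar R) :=
      Nat.Coprime.mul (coprime_of_lt_minFac hb1 (by omega)) (coprime_of_lt_minFac hm1 hmp)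
    obtain ⟨u, hu⟩ := exists_cast_inv hcop
    have hvmj : ∀ j : Fin n, (m • v) j = if j = j₁ then (m : R) else 0 := by
      intro j
      by_cases hjj : j = j₁
      · subst hjj; simp [hv, nsmul_eq_mul]
      · simp [hv, hjj]
    have hβ₁coef : ∀ h : Fin n → R, coefC β₁ γs h = ((γs j₁ + 1 : ℕ) : R) * h j₁ := by
      refine hcoefval β₁ j₁ (fun i hi => ?_) (by rw [hγsj₁]; omega)
      rw [hγs_apply i, if_neg hi]
    apply hnt β₁ hβ₁
    intro z
    have key : ∀ β ∈ B, ψ β (coefC β γs (m • v) * (u * z))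
        = if β = β₁ then ψ β₁ (((β₁ j₁ * m : ℕ) : R) * (u * z)) else 1 := by
      intro β hβ
      by_cases hββ₁ : β = β₁
      · subst hββ₁
        rw [if_pos rfl, hβ₁coef, hvmj, if_pos rfl]
        congr 1
        have hγ1 : γs j₁ + 1 = β j₁ := by rw [hγsj₁]; omega
        rw [hγ1]
        push_cast
        ring
      · rw [if_neg hββ₁]
        obtain ⟨r, j, hrj, hprop⟩ := hlin β hβ
        rw [hrj, hvmj]
        by_cases hjj₁ : j = j₁
        · by_cases hr : r = 0
          · rw [hr, zero_mul, zero_mul, charfn_zero (hchar β hβ)]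
          · exfalso
            obtain ⟨hne, hj⟩ := hprop hr
            apply hββ₁
            rw [← hβ₁eq]
            funext i
            rw [Function.update_apply]
            by_cases hij : i = j₁
            · rw [if_pos hij]; subst hij; rw [← hjj₁] at *; omega
            · rw [if_neg hij]
              exact hne i (by rw [hjj₁]; exact hij)
        · rw [if_neg hjj₁, mul_zero, zero_mul, charfn_zero (hchar β hβ)]
    have hPmu := hPm (u * z)
    rw [Finset.prod_congr rfl key, Finset.prod_ite_eq' B β₁
      (fun _ => ψ β₁ (((β₁ j₁ * m : ℕ) : R) * (u * z))), if_pos hβ₁] at hPmu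
    have harg : ((β₁ j₁ * m : ℕ) : R) * (u * z) = z := by
      rw [← mul_assoc, hu, one_mul]
    rw [harg] at hPmu
    exact hPmu
  -- cosets counting
  set Hf := Finset.univ.filter P with hHf
  have hdisj : ∀ m ∈ Finset.range p, ∀ m' ∈ Finset.range p, m ≠ m' →
      Disjoint (Hf.image (fun h => h + m • v)) (Hf.image (fun h => h + m' • v)) := by
    have hs : ∀ m m' : ℕ, m < m' → m' < p →
        Disjoint (Hf.image (fun h => h + m • v)) (Hf.image (fun h => h + m' • v)) := by
      intro m m' hlt hm'p
      rw [Finset.disjoint_left]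
      rintro a ha ha'
      obtain ⟨h, hh, rfl⟩ := Finset.mem_image.1 ha
      obtain ⟨h', hh', heq⟩ := Finset.mem_image.1 ha'
      have hPh : P h := (Finset.mem_filter.1 hh).2
      have hPh' : P h' := (Finset.mem_filter.1 hh').2
      have hsub : (m' - m) • v = h - h' := by
        calc (m' - m) • v = m' • v + -(m • v) := sub_nsmul v hlt.le
        _ = h - h' := by
            have heq' : h' + m' • v = h + m • v := heq
            have h2 : m' • v = h + m • v - h' := by
              rw [← heq']; abel
            rw [h2]; abel
      have hPsub' : P ((m' - m) • v) := by
        rw [hsub]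
        exact hPsub h h' hPh hPh'
      exact hmv (m' - m) (by omega) (by omega) hPsub'
    intro m hm m' hm' hne
    rcases lt_or_gt_of_ne hne with hlt | hgt
    · exact hs m m' hlt (Finset.mem_range.1 hm')
    · exact (hs m' m hgt (Finset.mem_range.1 hm)).symm
  calc p * Hf.card
      = ∑ _m ∈ Finset.range p, Hf.card := by
        rw [Finset.sum_const, Finset.card_range, smul_eq_mul]
    _ = ∑ m ∈ Finset.range p, (Hf.image (fun h => h + m • v)).card := by
        refine Finset.sum_congr rfl fun m _ => ?_
        exact (Finset.card_image_of_injective _ (add_left_injective (m • v))).symm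
    _ = ((Finset.range p).biUnion (fun m => Hf.image (fun h => h + m • v))).card :=
        (Finset.card_biUnion hdisj).symm
    _ ≤ Fintype.card (Fin n → R) := Finset.card_le_univ _
    _ = Fintype.card R ^ n := by rw [Fintype.card_fun, Fintype.card_fin]

end Ring
section Aux
variable {R : Type*} [CommRing R] [Fintype R] [Nontrivial R]

set_option maxHeartbeats 1000000 in
lemma aux_estimate (n : ℕ) : ∀ d : ℕ, 0 < d → d < (ringChar R).minFac →
    ∀ (B : Finset (Fin n → ℕ)) (ψ : (Fin n → ℕ) → R → ℂ),
    B.Nonempty → (∀ β ∈ B, β ≠ 0) →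
    (∀ β ∈ B, IsAddCharFn (ψ β)) → (∀ β ∈ B, ¬ ∀ x, ψ β x = 1) →
    (∀ β ∈ B, ∑ i, β i ≤ d) →
    ‖((1 / (Fintype.card R : ℂ) ^ n) * ∑ y : Fin n → R, ∏ β ∈ B, ψ β (mpow y β))‖
      ≤ (((d : ℝ) - 1) / ((ringChar R).minFac : ℝ)) ^ ((2:ℝ) ^ (-(d:ℝ))) := by
  intro d
  induction d using Nat.strong_induction_on with
  | _ d IH =>
  intro hd0 hdp B ψ hBne hB0 hchar hnt hdeg
  classical
  set p := (ringChar R).minFac with hp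
  have hchar1 : ringChar R ≠ 1 := CharP.ringChar_ne_one
  have hpp : p.Prime := Nat.minFac_prime hchar1
  have hp2 : 2 ≤ p := hpp.two_le
  have hpR : (0:ℝ) < (p:ℝ) := by positivity
  have hcardpos : 0 < Fintype.card R := Fintype.card_pos
  set cR : ℝ := (Fintype.card R : ℝ) with hcR
  have hcRpos : 0 < cR := by rw [hcR]; positivity
  have hcn : (0:ℝ) < cR ^ n := pow_pos hcRpos n
  have hd1R : (1:ℝ) ≤ (d:ℝ) := by exact_mod_cast hd0
  have hRHS0 : (0:ℝ) ≤ ((d:ℝ) - 1) / (p:ℝ) := div_nonneg (by linarith) (le_of_lt hpR)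
  have habs1 : ∀ T : ℂ, ‖((1 / (Fintype.card R : ℂ) ^ n) * T)‖
      = (1 / cR ^ n) * ‖T‖ := by
    intro T
    rw [norm_mul, norm_div, norm_one, norm_pow, Complex.norm_natCast, hcR]
  obtain ⟨β₁, hβ₁, hβ₁max⟩ := Finset.exists_max_image B (fun β => ∑ i, β i) hBne
  have hsumpos : ∀ β ∈ B, 0 < ∑ i, β i := by
    intro β hβ
    rcases Nat.eq_zero_or_pos (∑ i, β i) with h0 | h0
    · exact absurd (funext fun i => Finset.sum_eq_zero_iff.1 h0 i (Finset.mem_univ i)) (hB0 β hβ)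
    · exact h0
  by_cases hD : ∑ i, β₁ i ≤ 1
  · -- base case : all monomials have total degree 1, sum vanishes
    have hdeg1 : ∀ β ∈ B, ∑ i, β i = 1 := by
      intro β hβ
      have h1 := hβ₁max β hβ
      have h2 := hsumpos β hβ
      omega
    rw [base_sum_zero B ψ hBne hchar hnt hdeg1, mul_zero, norm_zero]
    exact Real.rpow_nonneg hRHS0 _
  · push_neg at hD
    -- inductive step
    have hd2 : 2 ≤ d := le_trans hD (hdeg β₁ hβ₁)
    obtain ⟨j₁, hj₁⟩ : ∃ j, 0 < β₁ j := by
      by_contra hc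
      push_neg at hc
      have : ∑ i, β₁ i = 0 := Finset.sum_eq_zero fun i _ => Nat.le_zero.1 (hc i)
      omega
    set γs : Fin n → ℕ := Function.update β₁ j₁ (β₁ j₁ - 1) with hγs
    have hγs_apply : ∀ i, γs i = if i = j₁ then β₁ j₁ - 1 else β₁ i := by
      intro i; rw [hγs, Function.update_apply]
    have hβ₁le : ∀ i, β₁ i ≤ d := fun i =>
      le_trans (Finset.single_le_sum (fun i _ => Nat.zero_le _) (Finset.mem_univ i)) (hdeg β₁ hβ₁)
    have hγsle : ∀ i, γs i ≤ β₁ i := by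
      intro i
      rw [hγs_apply]
      by_cases hij : i = j₁
      · subst hij; rw [if_pos rfl]; omega
      · rw [if_neg hij]
    have hγssum : ∑ i, γs i + 1 = ∑ i, β₁ i := by
      rw [hγs]
      rw [Finset.sum_update_of_mem (Finset.mem_univ j₁)]
      rw [← Finset.add_sum_erase Finset.univ β₁ (Finset.mem_univ j₁)]
      have : Finset.univ \ {j₁} = Finset.univ.erase j₁ := by
        ext i; simp [Finset.mem_erase, and_comm]
      rw [this]
      omega
    have hγs0 : γs ≠ 0 := by
      intro hc
      have : ∑ i, γs i = 0 := by rw [hc]; simp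
      omega
    have hγsBigB : γs ∈ BigB n d := mem_BigB.2 fun i => le_trans (hγsle i) (hβ₁le i)
    set Θ : (Fin n → ℕ) → (Fin n → R) → R → ℂ :=
      fun γ h x => ∏ β ∈ B, ψ β (coefC β γ h * x) with hΘ
    have hΘchar : ∀ γ h, IsAddCharFn (Θ γ h) := by
      intro γ h
      constructor
      · intro x x'
        rw [hΘ]
        simp only
        rw [← Finset.prod_mul_distrib]
        refine Finset.prod_congr rfl fun β hβ => ?_
        rw [mul_add, (hchar β hβ).1]
      · intro x
        rw [hΘ]
        simp only
        rw [norm_prod]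
        exact Finset.prod_eq_one fun β hβ => (hchar β hβ).2 _
    set Ψ : (Fin n → R) → ℂ := fun y => ∏ β ∈ B, ψ β (mpow y β) with hΨ
    have hΨabs : ∀ z, ‖(Ψ z)‖ = 1 := by
      intro z
      rw [hΨ]
      simp only
      rw [norm_prod]
      exact Finset.prod_eq_one fun β hβ => (hchar β hβ).2 _
    have hkey : ∀ (h y : Fin n → R), Ψ (y + h) * (starRingEnd ℂ) (Ψ y)
        = ∏ γ ∈ BigB n d, Θ γ h (mpow y γ) := by
      intro h y
      rw [hΨ]
      simp only
      rw [map_prod (starRingEnd ℂ), ← Finset.prod_mul_distrib]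
      calc ∏ β ∈ B, (ψ β (mpow (y + h) β) * (starRingEnd ℂ) (ψ β (mpow y β)))
          = ∏ β ∈ B, ∏ γ ∈ BigB n d, ψ β (coefC β γ h * mpow y γ) := by
            refine Finset.prod_congr rfl fun β hβ => ?_
            rw [charfn_sub_conj (hchar β hβ), expand_mpow d β (fun i =>
              le_trans (Finset.single_le_sum (fun i _ => Nat.zero_le _) (Finset.mem_univ i))
                (hdeg β hβ)) y h, charfn_sum (hchar β hβ)]
        _ = ∏ γ ∈ BigB n d, Θ γ h (mpow y γ) := Finset.prod_comm
    -- the bad set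
    set Hf := Finset.univ.filter (fun h : Fin n → R => ∀ x,
        (∏ β ∈ B, ψ β (coefC β (Function.update β₁ j₁ (β₁ j₁ - 1)) h * x)) = 1) with hHf
    have hcount : p * Hf.card ≤ Fintype.card R ^ n :=
      count_bad B ψ hchar hnt hdp β₁ hβ₁ hβ₁max (hdeg β₁ hβ₁) j₁ hj₁
    have hHfmem : ∀ h : Fin n → R, h ∈ Hf ↔ ∀ x, Θ γs h x = 1 := by
      intro h
      rw [hHf, Finset.mem_filter]
      constructor
      · intro hh x; exact hh.2 x
      · intro hh; exact ⟨Finset.mem_univ h, hh⟩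
    -- abbreviations for the IH bound
    set E : ℝ := (2:ℝ) ^ (-(((d - 1 : ℕ)):ℝ)) with hE
    set B₀ : ℝ := ((((d - 1 : ℕ)):ℝ) - 1) / (p:ℝ) with hB₀
    set X : ℝ := B₀ ^ E with hX
    have hd1cast : (((d - 1 : ℕ)):ℝ) = (d:ℝ) - 1 := by
      have h1 : (1:ℕ) ≤ d := hd0
      rw [Nat.cast_sub h1, Nat.cast_one]
    have hd2R : (2:ℝ) ≤ (d:ℝ) := by exact_mod_cast hd2
    have hdpR : (d:ℝ) < (p:ℝ) := by exact_mod_cast hdp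
    have hB₀0 : 0 ≤ B₀ := by
      rw [hB₀, hd1cast]
      apply div_nonneg _ (le_of_lt hpR)
      linarith
    have hB₀1 : B₀ ≤ 1 := by
      rw [hB₀, hd1cast, div_le_one hpR]
      linarith
    have hE0 : 0 < E := Real.rpow_pos_of_pos two_pos _
    have hE1 : E < 1 := by
      rw [hE]
      apply Real.rpow_lt_one_of_one_lt_of_neg one_lt_two
      rw [hd1cast]
      linarith
    have hX0 : 0 ≤ X := Real.rpow_nonneg hB₀0 _
    have hX1 : X ≤ 1 := Real.rpow_le_one hB₀0 hB₀1 (le_of_lt hE0)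
    -- bound for good h via the induction hypothesis
    have hgoodbound : ∀ h : Fin n → R, h ∉ Hf →
        ‖(∑ y : Fin n → R, Ψ (y + h) * (starRingEnd ℂ) (Ψ y))‖ ≤ X * cR ^ n := by
      intro h hh
      have hhnt : ¬ ∀ x, Θ γs h x = 1 := fun hc => hh ((hHfmem h).2 hc)
      set B' := ((BigB n d).erase 0).filter (fun γ => ¬ ∀ x, Θ γ h x = 1) with hB'
      have hγsB' : γs ∈ B' := Finset.mem_filter.2 ⟨Finset.mem_erase.2 ⟨hγs0, hγsBigB⟩, hhnt⟩
      have hdegB' : ∀ γ ∈ B', ∑ i, γ i ≤ d - 1 := by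
        intro γ hγ
        have hnt' := (Finset.mem_filter.1 hγ).2
        push_neg at hnt'
        obtain ⟨x, hx⟩ := hnt'
        have hex : ∃ β ∈ B, coefC β γ h ≠ 0 := by
          by_contra hc
          push_neg at hc
          apply hx
          rw [hΘ]
          exact Finset.prod_eq_one fun β hβ => by
            rw [hc β hβ, zero_mul, charfn_zero (hchar β hβ)]
        obtain ⟨β, hβ, hcne⟩ := hex
        have hγle : ∀ i, γ i ≤ β i := by
          intro i
          by_contra hlt
          push_neg at hlt
          apply hcne
          rw [coefC]
          split
          · rfl
          · rw [Finset.prod_eq_zero (Finset.mem_univ i) (Nat.choose_eq_zero_of_lt hlt)]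
            push_cast
            rw [zero_mul]
        have hγne : γ ≠ β := by
          intro hc; apply hcne; rw [coefC, if_pos hc]
        have h1 := sum_lt_of_le_of_ne hγle hγne
        have h2 := hdeg β hβ
        omega
      have hB'ne0 : ∀ γ ∈ B', γ ≠ 0 := fun γ hγ =>
        (Finset.mem_erase.1 (Finset.mem_filter.1 hγ).1).1
      have hIH := IH (d-1) (by omega) (by omega) (by omega) B' (fun γ => Θ γ h)
        ⟨γs, hγsB'⟩ hB'ne0 (fun γ _ => hΘchar γ h)
        (fun γ hγ => (Finset.mem_filter.1 hγ).2) hdegB'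
      have hconst : ∀ y : Fin n → R, ∏ γ ∈ BigB n d, Θ γ h (mpow y γ)
          = Θ 0 h 1 * ∏ γ ∈ B', Θ γ h (mpow y γ) := by
        intro y
        have h0mem : (0 : Fin n → ℕ) ∈ BigB n d := mem_BigB.2 fun i => Nat.zero_le d
        rw [← Finset.mul_prod_erase (BigB n d) _ h0mem]
        have hm0 : mpow y (0 : Fin n → ℕ) = 1 := by simp [mpow]
        rw [hm0]
        congr 1
        refine (Finset.prod_subset (Finset.filter_subset _ _) (fun γ hγ hγ' => ?_)).symm
        have htriv : ∀ x, Θ γ h x = 1 := by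
          by_contra hcc
          exact hγ' (Finset.mem_filter.2 ⟨hγ, hcc⟩)
        exact htriv (mpow y γ)
      have hsumeq : (∑ y : Fin n → R, Ψ (y + h) * (starRingEnd ℂ) (Ψ y))
          = Θ 0 h 1 * ∑ y : Fin n → R, ∏ γ ∈ B', Θ γ h (mpow y γ) := by
        rw [Finset.mul_sum]
        exact Finset.sum_congr rfl fun y _ => by rw [hkey h y, hconst y]
      rw [hsumeq, norm_mul, (hΘchar 0 h).2 1, one_mul]
      have hIHX : (1 / cR ^ n) *
          ‖(∑ y : Fin n → R, ∏ γ ∈ B', Θ γ h (mpow y γ))‖ ≤ X := by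
        rw [← habs1]
        exact hIH
      calc ‖(∑ y : Fin n → R, ∏ γ ∈ B', Θ γ h (mpow y γ))‖
          = cR ^ n * ((1 / cR ^ n) *
            ‖(∑ y : Fin n → R, ∏ γ ∈ B', Θ γ h (mpow y γ))‖) := by
            field_simp
        _ ≤ cR ^ n * X := mul_le_mul_of_nonneg_left hIHX (le_of_lt hcn)
        _ = X * cR ^ n := mul_comm _ _
    -- trivial bound
    have htriv : ∀ h : Fin n → R,
        ‖(∑ y : Fin n → R, Ψ (y + h) * (starRingEnd ℂ) (Ψ y))‖ ≤ cR ^ n := by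
      intro h
      refine le_trans (norm_sum_le _ _) ?_
      have : ∀ y : Fin n → R, ‖(Ψ (y + h) * (starRingEnd ℂ) (Ψ y))‖ = 1 := by
        intro y
        rw [norm_mul, Complex.norm_conj, hΨabs, hΨabs, mul_one]
      rw [Finset.sum_congr rfl (fun y _ => this y), Finset.sum_const, Finset.card_univ,
        nsmul_eq_mul, mul_one]
      rw [Fintype.card_fun, Fintype.card_fin]
      push_cast
      exact le_refl _
    -- Cauchy–Schwarz
    set T : ℂ := ∑ y : Fin n → R, Ψ y with hT
    have hTT : T * (starRingEnd ℂ) T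
        = ∑ h : Fin n → R, ∑ z : Fin n → R, Ψ (z + h) * (starRingEnd ℂ) (Ψ z) := by
      rw [hT, map_sum, Finset.sum_mul_sum]
      rw [Finset.sum_comm]
      calc ∑ z : Fin n → R, ∑ y : Fin n → R, Ψ y * (starRingEnd ℂ) (Ψ z)
          = ∑ z : Fin n → R, ∑ h : Fin n → R, Ψ (z + h) * (starRingEnd ℂ) (Ψ z) :=
            Finset.sum_congr rfl fun z _ =>
              (Fintype.sum_equiv (Equiv.addLeft z)
                (fun h => Ψ (z + h) * (starRingEnd ℂ) (Ψ z))
                (fun y => Ψ y * (starRingEnd ℂ) (Ψ z)) (fun x => rfl)).symm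
        _ = ∑ h : Fin n → R, ∑ z : Fin n → R, Ψ (z + h) * (starRingEnd ℂ) (Ψ z) :=
            Finset.sum_comm
    have hS2 : (‖((1 / (Fintype.card R : ℂ) ^ n) * T)‖) ^ 2
        = (1 / cR ^ n) ^ 2 * ‖(T * (starRingEnd ℂ) T)‖ := by
      rw [habs1, norm_mul T, Complex.norm_conj]
      ring
    set M : ℕ := Fintype.card (Fin n → R) with hM
    have hMcast : (M:ℝ) = cR ^ n := by
      rw [hM, Fintype.card_fun, Fintype.card_fin]
      push_cast
      rfl
    have hsum_bound : ‖(T * (starRingEnd ℂ) T)‖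
        ≤ (Hf.card : ℝ) * cR ^ n + ((M:ℝ) - Hf.card) * (X * cR ^ n) := by
      rw [hTT]
      refine le_trans (norm_sum_le _ _) ?_
      rw [← Finset.sum_add_sum_compl Hf]
      have hb1 : ∑ h ∈ Hf, ‖(∑ z : Fin n → R, Ψ (z + h) * (starRingEnd ℂ) (Ψ z))‖
          ≤ (Hf.card : ℝ) * cR ^ n := by
        refine le_trans (Finset.sum_le_card_nsmul Hf _ (cR ^ n) (fun h _ => htriv h)) ?_
        rw [nsmul_eq_mul]
      have hb2 : ∑ h ∈ Hfᶜ, ‖(∑ z : Fin n → R, Ψ (z + h) * (starRingEnd ℂ) (Ψ z))‖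
          ≤ ((M:ℝ) - Hf.card) * (X * cR ^ n) := by
        refine le_trans (Finset.sum_le_card_nsmul Hfᶜ _ (X * cR ^ n)
          (fun h hh => hgoodbound h (Finset.mem_compl.1 hh))) ?_
        rw [nsmul_eq_mul, Finset.card_compl]
        rw [Nat.cast_sub (Finset.card_le_univ Hf)]
      exact add_le_add hb1 hb2
    -- numeric endgame
    have hq : (Hf.card : ℝ) / cR ^ n ≤ 1 / (p:ℝ) := by
      rw [div_le_div_iff₀ hcn hpR]
      have hc2 : ((p * Hf.card : ℕ) : ℝ) ≤ ((Fintype.card R ^ n : ℕ) : ℝ) := by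
        exact_mod_cast hcount
      push_cast at hc2
      rw [hcR]
      calc (Hf.card : ℝ) * (p:ℝ) = (p:ℝ) * Hf.card := mul_comm _ _
        _ ≤ ((Fintype.card R : ℝ)) ^ n := hc2
        _ = 1 * ((Fintype.card R : ℝ)) ^ n := (one_mul _).symm
    have hq0 : (0:ℝ) ≤ (Hf.card : ℝ) / cR ^ n := by positivity
    have habsT : (‖((1 / (Fintype.card R : ℂ) ^ n) * T)‖) ^ 2
        ≤ 1/(p:ℝ) + (1 - 1/(p:ℝ)) * X := by
      rw [hS2]
      have h1 : (1 / cR ^ n) ^ 2 * ((Hf.card : ℝ) * cR ^ n + ((M:ℝ) - Hf.card) * (X * cR ^ n))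
          = (Hf.card : ℝ)/cR^n * (1 - X) + X := by
        rw [hMcast]
        field_simp
        ring
      have h2 : ‖(T * (starRingEnd ℂ) T)‖ ≥ 0 := norm_nonneg _
      have h3 := mul_le_mul_of_nonneg_left hsum_bound
        (by positivity : (0:ℝ) ≤ (1 / cR ^ n) ^ 2)
      rw [h1] at h3
      have h4 : (Hf.card : ℝ)/cR^n * (1 - X) ≤ 1/(p:ℝ) * (1 - X) :=
        mul_le_mul_of_nonneg_right hq (by linarith)
      calc (1 / cR ^ n) ^ 2 * ‖(T * (starRingEnd ℂ) T)‖
          ≤ (Hf.card : ℝ)/cR^n * (1 - X) + X := h3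
        _ ≤ 1/(p:ℝ) * (1 - X) + X := by linarith
        _ = 1/(p:ℝ) + (1 - 1/(p:ℝ)) * X := by ring
    -- concavity
    have h1p0 : (0:ℝ) ≤ 1/(p:ℝ) := by positivity
    have hp1R : (1:ℝ) ≤ (p:ℝ) := by exact_mod_cast hpp.one_lt.le
    have h1p1 : (0:ℝ) ≤ 1 - 1/(p:ℝ) := by
      rw [sub_nonneg]
      rw [div_le_one hpR]
      exact hp1R
    have hconc := ((Real.strictConcaveOn_rpow hE0 hE1).concaveOn).2
      (Set.mem_Ici.2 (zero_le_one)) (Set.mem_Ici.2 hB₀0) h1p0 h1p1 (by ring)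
    simp only [smul_eq_mul, Real.one_rpow] at hconc
    have hmono : (1/(p:ℝ) * 1 + (1 - 1/(p:ℝ)) * B₀) ^ E ≤ (((d:ℝ) - 1)/(p:ℝ)) ^ E := by
      apply Real.rpow_le_rpow
      · have hpr := mul_nonneg h1p1 hB₀0
        linarith
      · have hB₀le : (1 - 1/(p:ℝ)) * B₀ ≤ B₀ :=
          mul_le_of_le_one_left hB₀0 (by linarith)
        have : B₀ = ((d:ℝ) - 2)/(p:ℝ) := by rw [hB₀, hd1cast]; ring_nf
        rw [mul_one]
        rw [this] at hB₀le ⊢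
        have : 1/(p:ℝ) + ((d:ℝ) - 2)/(p:ℝ) = ((d:ℝ) - 1)/(p:ℝ) := by ring
        linarith
      · exact le_of_lt hE0
    have hfinal2 : (‖((1 / (Fintype.card R : ℂ) ^ n) * T)‖) ^ 2
        ≤ (((d:ℝ) - 1)/(p:ℝ)) ^ E := by
      calc (‖((1 / (Fintype.card R : ℂ) ^ n) * T)‖) ^ 2
          ≤ 1/(p:ℝ) + (1 - 1/(p:ℝ)) * X := habsT
        _ = 1/(p:ℝ) * 1 + (1 - 1/(p:ℝ)) * (B₀ ^ E) := by rw [hX]; ring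
        _ ≤ (1/(p:ℝ) * 1 + (1 - 1/(p:ℝ)) * B₀) ^ E := hconc
        _ ≤ (((d:ℝ) - 1)/(p:ℝ)) ^ E := hmono
    -- conclude
    have hYsq : ((((d:ℝ) - 1)/(p:ℝ)) ^ ((2:ℝ) ^ (-(d:ℝ)))) ^ (2:ℕ)
        = (((d:ℝ) - 1)/(p:ℝ)) ^ E := by
      rw [← Real.rpow_natCast ((((d:ℝ) - 1)/(p:ℝ)) ^ ((2:ℝ) ^ (-(d:ℝ)))) 2]
      rw [← Real.rpow_mul hRHS0]
      congr 1
      rw [hE, hd1cast]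
      push_cast
      rw [show -((d:ℝ) - 1) = -(d:ℝ) + 1 by ring]
      rw [Real.rpow_add_one two_ne_zero]
    have hfin : (‖((1 / (Fintype.card R : ℂ) ^ n) * T)‖) ^ 2
        ≤ ((((d:ℝ) - 1)/(p:ℝ)) ^ ((2:ℝ) ^ (-(d:ℝ)))) ^ 2 := by
      rw [show ((((d:ℝ) - 1)/(p:ℝ)) ^ ((2:ℝ) ^ (-(d:ℝ)))) ^ 2
        = ((((d:ℝ) - 1)/(p:ℝ)) ^ ((2:ℝ) ^ (-(d:ℝ)))) ^ (2:ℕ) by norm_num, hYsq]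
      exact hfinal2
    exact (pow_le_pow_iff_left₀ (norm_nonneg _)
      (Real.rpow_nonneg hRHS0 _) two_ne_zero).1 hfin

end Aux

/-- **Proposition (character sums along distinct monomials).** Let `R` be a finite commutative
ring of characteristic `N` and `n ≥ 1`. Let `α₁, …, α_K` be distinct nonzero `n`-tuples of
nonnegative integers, `χ₁, …, χ_K` nontrivial additive characters of `R`, and `d` a positive
integer with `d < lpf(N)` and `d ≥ max_k ∑ᵢ α^{(k)}ᵢ`. Then
`| (1/|R|^n) ∑_{y ∈ Rⁿ} ∏ₖ χₖ(y^{αₖ}) | ≤ ((d−1)/lpf(N))^{2^{−d}}`. -/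
theorem distinct_powers_character_estimate
    (R : Type*) [CommRing R] [Fintype R] [Nontrivial R]
    (n K : ℕ) (hn : 1 ≤ n) (hK : 1 ≤ K)
    (α : Fin K → Fin n → ℕ) (hαinj : Function.Injective α) (hα : ∀ k, α k ≠ 0)
    (χ : Fin K → R → ℂ) (hχ : ∀ k, IsAddCharFn (χ k))
    (hnontriv : ∀ k, ¬ ∀ x, χ k x = 1)
    (d : ℕ) (hd0 : 0 < d) (hdlt : d < Nat.minFac (ringChar R))
    (hdge : ∀ k, ∑ i, α k i ≤ d) :
    ‖((1 / (Fintype.card R : ℂ) ^ n) *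
        ∑ y : Fin n → R, ∏ k : Fin K, χ k (∏ i : Fin n, y i ^ α k i))‖
      ≤ (((d : ℝ) - 1) / (Nat.minFac (ringChar R) : ℝ)) ^ ((2 : ℝ) ^ (-(d : ℝ))) := by
  classical
  set B : Finset (Fin n → ℕ) := Finset.image α Finset.univ with hB
  set ψ : (Fin n → ℕ) → R → ℂ :=
    fun β => if h : ∃ k, α k = β then χ h.choose else fun _ => 1 with hψ
  have hψα : ∀ k, ψ (α k) = χ k := by
    intro k
    rw [hψ]
    simp only
    rw [dif_pos (⟨k, rfl⟩ : ∃ k', α k' = α k)]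
    exact congrArg χ (hαinj (⟨k, rfl⟩ : ∃ k', α k' = α k).choose_spec)
  have hmem : ∀ β ∈ B, ∃ k, α k = β := by
    intro β hβ
    obtain ⟨k, -, hk⟩ := Finset.mem_image.1 hβ
    exact ⟨k, hk⟩
  have h := aux_estimate n d hd0 hdlt B ψ
    ⟨α ⟨0, hK⟩, Finset.mem_image.2 ⟨⟨0, hK⟩, Finset.mem_univ _, rfl⟩⟩
    (fun β hβ => by obtain ⟨k, rfl⟩ := hmem β hβ; exact hα k)
    (fun β hβ => by obtain ⟨k, rfl⟩ := hmem β hβ; rw [hψα k]; exact hχ k)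
    (fun β hβ => by obtain ⟨k, rfl⟩ := hmem β hβ; rw [hψα k]; exact hnontriv k)
    (fun β hβ => by obtain ⟨k, rfl⟩ := hmem β hβ; exact hdge k)
  have hprod : ∀ y : Fin n → R, ∏ β ∈ B, ψ β (mpow y β)
      = ∏ k, χ k (∏ i, y i ^ α k i) := by
    intro y
    rw [hB, Finset.prod_image (fun k _ k' _ hkk => hαinj hkk)]
    exact Finset.prod_congr rfl fun k _ => by rw [hψα k]; rfl
  have hsum : ∑ y : Fin n → R, ∏ β ∈ B, ψ β (mpow y β)
      = ∑ y : Fin n → R, ∏ k, χ k (∏ i, y i ^ α k i) :=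
    Finset.sum_congr rfl fun y _ => hprod y
  rw [hsum] at h
  exact h
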